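/- Closed form for the rolling average variance in the overlapping regime: with s_{p,m} := (1/(m−p)²) · Σ_{i=1}^{m−p} Σ_{j=1}^{m−p} NLRC_{p,m}(i,j), for every integer ℓ with 1 ≤ ℓ ≤ p one has s_{p, p+ℓ} = (1/ℓ²) · Σ_{j=0}^{ℓ−1} (φ₀ + φ₁ + ⋯ + φ_j)², where φ₀ := −1. -/

import Mathlib

open Matrix Finset

/-- Context: AR(p) coefficients `φ`, white-noise variance `σ2`, autocovariance
sequence `γ` satisfying the Yule–Walker equations, and the autocovariance
Toeplitz matrices `Γ m`, assumed positive definite for `m ≥ 1`. -/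
theorem stmt_15
    (p : ℕ) (hp : 1 ≤ p)
    (φ : ℕ → ℝ) (hφ0 : φ 0 = -1)
    (σ2 : ℝ) (hσ : 0 < σ2)
    (γ : ℤ → ℝ)
    (hsym : ∀ j : ℤ, γ (-j) = γ j)
    (hYW0 : γ 0 = (∑ i ∈ Finset.Icc 1 p, φ i * γ (i : ℤ)) + σ2)
    (hYW : ∀ j : ℤ, 1 ≤ j → γ j = ∑ i ∈ Finset.Icc 1 p, φ i * γ (j - (i : ℤ)))
    (Γ : (m : ℕ) → Matrix (Fin m) (Fin m) ℝ)
    (hΓ : ∀ m : ℕ, ∀ i j : Fin m, Γ m i j = γ |(i : ℤ) - (j : ℤ)|)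
    (hpd : ∀ m : ℕ, 1 ≤ m → (Γ m).PosDef)
    :
    let s : ℕ → ℝ := fun m =>
      (1 / ((m - p : ℕ) : ℝ) ^ 2) * ∑ i : Fin (m - p), ∑ j : Fin (m - p),
        σ2 * (Γ m)⁻¹ ⟨p + i, by have := i.isLt; omega⟩ ⟨p + j, by have := j.isLt; omega⟩
    ∀ ℓ : ℕ, 1 ≤ ℓ → ℓ ≤ p →
      s (p + ℓ) = (1 / (ℓ : ℝ) ^ 2) *
        ∑ j ∈ Finset.range ℓ, (∑ k ∈ Finset.range (j + 1), φ k) ^ 2 := by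
  intro s ℓ hℓ1 hℓp
  have hmp : p + ℓ - p = ℓ := by omega
  -- abbreviations
  set S : ℕ → ℝ := fun j => ∑ k ∈ Finset.range (j + 1), φ k with hSdef
  set g : ℤ → ℝ := fun n => ∑ k ∈ Finset.range (p + 1), φ k * γ (n - (k : ℤ)) with hgdef
  have hγabs : ∀ z : ℤ, γ |z| = γ z := by
    intro z
    rcases abs_choice z with h | h
    · rw [h]
    · rw [h, hsym]
  have hIcc : ∀ F : ℕ → ℝ, ∑ i ∈ Finset.Icc 1 p, F i = ∑ i ∈ Finset.range p, F (i + 1) := by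
    intro F
    rw [← Finset.Ico_add_one_right_eq_Icc, Finset.sum_Ico_eq_sum_range]
    simp [add_comm]
  have hg_split : ∀ n : ℤ, g n =
      (∑ i ∈ Finset.range p, φ (i + 1) * γ (n - ((i : ℤ) + 1))) + φ 0 * γ n := by
    intro n
    simp only [hgdef]
    rw [Finset.sum_range_succ' (fun k => φ k * γ (n - (k : ℤ))) p]
    push_cast
    simp
  have g_pos : ∀ n : ℤ, 1 ≤ n → g n = 0 := by
    intro n hn
    rw [hg_split, hφ0]
    have h1 := hYW n hn
    rw [hIcc (fun i => φ i * γ (n - (i : ℤ)))] at h1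
    push_cast at h1
    linarith
  have g_zero : g 0 = -σ2 := by
    rw [hg_split, hφ0]
    have h1 := hYW0
    rw [hIcc (fun i => φ i * γ (i : ℤ))] at h1
    have h2 : ∀ i ∈ Finset.range p, φ (i + 1) * γ ((0 : ℤ) - ((i : ℤ) + 1))
        = φ (i + 1) * γ ((i : ℤ) + 1) := by
      intro i _
      rw [show (0 : ℤ) - ((i : ℤ) + 1) = -((i : ℤ) + 1) by ring, hsym]
    rw [Finset.sum_congr rfl h2]
    push_cast at h1
    linarith
  have gkey : ∀ n : ℤ, 1 ≤ n → ∑ k ∈ Finset.range (p + 1), φ k * g ((k : ℤ) - n) = 0 := by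
    intro n hn
    have hswap : ∀ k ∈ Finset.range (p + 1), φ k * g ((k : ℤ) - n)
        = ∑ j ∈ Finset.range (p + 1), φ j * (φ k * γ ((n + (j : ℤ)) - (k : ℤ))) := by
      intro k _
      rw [hgdef, Finset.mul_sum]
      refine Finset.sum_congr rfl fun j _ => ?_
      have harg : (k : ℤ) - n - (j : ℤ) = -((n + (j : ℤ)) - (k : ℤ)) := by ring
      rw [harg, hsym]
      ring
    rw [Finset.sum_congr rfl hswap, Finset.sum_comm]
    refine Finset.sum_eq_zero fun j _ => ?_
    have : ∑ k ∈ Finset.range (p + 1), φ j * (φ k * γ ((n + (j : ℤ)) - (k : ℤ)))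
        = φ j * g (n + (j : ℤ)) := by
      rw [hgdef, Finset.mul_sum]
    rw [this, g_pos (n + (j : ℤ)) (by omega), mul_zero]
  have key : ∀ i : ℕ, i ≤ p → ∑ t ∈ Finset.range (i + 1), S t * g ((t : ℤ) - (i : ℤ)) = σ2 := by
    intro i
    induction i with
    | zero =>
      intro _
      rw [Finset.sum_range_one]
      have : S 0 = φ 0 := by rw [hSdef]; exact Finset.sum_range_one φ
      simp only [Nat.cast_zero, sub_zero]
      rw [this, hφ0, g_zero]
      ring
    | succ i ih =>
      intro hip
      have hi : i ≤ p := Nat.le_of_succ_le hip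
      have hsplit : ∀ t ∈ Finset.range (i + 2), S t * g ((t : ℤ) - ((i : ℤ) + 1))
          = (∑ k ∈ Finset.range t, φ k) * g ((t : ℤ) - ((i : ℤ) + 1))
            + φ t * g ((t : ℤ) - ((i : ℤ) + 1)) := by
        intro t _
        have : S t = (∑ k ∈ Finset.range t, φ k) + φ t := by
          rw [hSdef]; exact Finset.sum_range_succ φ t
        rw [this]; ring
      have hcast : ∀ t ∈ Finset.range (i + 2), S t * g ((t : ℤ) - ((i + 1 : ℕ) : ℤ))
          = S t * g ((t : ℤ) - ((i : ℤ) + 1)) := by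
        intro t _; push_cast; ring_nf
      rw [Finset.sum_congr rfl hcast, Finset.sum_congr rfl hsplit, Finset.sum_add_distrib]
      have hfirst : ∑ t ∈ Finset.range (i + 2), (∑ k ∈ Finset.range t, φ k) * g ((t : ℤ) - ((i : ℤ) + 1)) = σ2 := by
        rw [Finset.sum_range_succ' (fun t => (∑ k ∈ Finset.range t, φ k) * g ((t : ℤ) - ((i : ℤ) + 1))) (i + 1)]
        simp only [Finset.sum_range_zero, zero_mul, add_zero, Nat.cast_zero]
        have heach : ∀ u ∈ Finset.range (i + 1),
            (∑ k ∈ Finset.range (u + 1), φ k) * g (((u + 1 : ℕ) : ℤ) - ((i : ℤ) + 1))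
            = S u * g ((u : ℤ) - (i : ℤ)) := by
          intro u _
          have h1 : S u = ∑ k ∈ Finset.range (u + 1), φ k := by rw [hSdef]
          have h3 : g (((u + 1 : ℕ) : ℤ) - ((i : ℤ) + 1)) = g ((u : ℤ) - (i : ℤ)) := by
            congr 1; push_cast; ring
          rw [h1, h3]
        calc ∑ u ∈ Finset.range (i + 1), (∑ k ∈ Finset.range (u + 1), φ k) * g (((u + 1 : ℕ) : ℤ) - ((i : ℤ) + 1))
            = ∑ u ∈ Finset.range (i + 1), S u * g ((u : ℤ) - (i : ℤ)) := Finset.sum_congr rfl heach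
          _ = σ2 := ih hi
      have hsecond : ∑ t ∈ Finset.range (i + 2), φ t * g ((t : ℤ) - ((i : ℤ) + 1)) = 0 := by
        have hext : ∑ t ∈ Finset.range (i + 2), φ t * g ((t : ℤ) - ((i : ℤ) + 1))
            = ∑ t ∈ Finset.range (p + 1), φ t * g ((t : ℤ) - ((i : ℤ) + 1)) := by
          have h12 : i + 2 ≤ p + 1 := by omega
          rw [Finset.range_eq_Ico, Finset.range_eq_Ico,
            ← Finset.sum_Ico_consecutive (fun t => φ t * g ((t : ℤ) - ((i : ℤ) + 1))) (Nat.zero_le (i + 2)) h12]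
          have hz : ∑ t ∈ Finset.Ico (i + 2) (p + 1), φ t * g ((t : ℤ) - ((i : ℤ) + 1)) = 0 := by
            refine Finset.sum_eq_zero fun t ht => ?_
            rw [Finset.mem_Ico] at ht
            rw [g_pos ((t : ℤ) - ((i : ℤ) + 1)) (by omega), mul_zero]
          rw [hz, add_zero]
        rw [hext]
        have := gkey ((i : ℤ) + 1) (by omega)
        calc ∑ t ∈ Finset.range (p + 1), φ t * g ((t : ℤ) - ((i : ℤ) + 1))
            = ∑ t ∈ Finset.range (p + 1), φ t * g ((t : ℤ) - ((i : ℤ) + 1)) := rfl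
          _ = 0 := this
      rw [hfirst, hsecond, add_zero]
  -- the magic vector
  set x : Fin (p + ℓ) → ℝ := fun v => ∑ t ∈ Finset.range ℓ,
      (if t ≤ (v : ℕ) ∧ (v : ℕ) ≤ p + t then φ (p + t - (v : ℕ)) * S t else 0) with hxdef
  have hGx : ∀ r : Fin (p + ℓ), (Γ (p + ℓ) *ᵥ x) r
      = ∑ t ∈ Finset.range ℓ, S t * g ((p : ℤ) + (t : ℤ) - (r : ℤ)) := by
    intro r
    have step1 : (Γ (p + ℓ) *ᵥ x) r = ∑ v : Fin (p + ℓ), ∑ t ∈ Finset.range ℓ,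
        (if t ≤ (v : ℕ) ∧ (v : ℕ) ≤ p + t then
          γ |(r : ℤ) - ((v : ℕ) : ℤ)| * (φ (p + t - (v : ℕ)) * S t) else 0) := by
      simp only [Matrix.mulVec, dotProduct, hxdef, hΓ, Finset.mul_sum, mul_ite, mul_zero]
    rw [step1, Finset.sum_comm]
    refine Finset.sum_congr rfl fun t ht => ?_
    rw [Finset.mem_range] at ht
    -- inner sum over v
    have hfin : (∑ v : Fin (p + ℓ), (if t ≤ (v : ℕ) ∧ (v : ℕ) ≤ p + t then
          γ |(r : ℤ) - ((v : ℕ) : ℤ)| * (φ (p + t - (v : ℕ)) * S t) else 0))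
        = ∑ n ∈ Finset.range (p + ℓ), (if t ≤ n ∧ n ≤ p + t then
          γ |(r : ℤ) - (n : ℤ)| * (φ (p + t - n) * S t) else 0) :=
      Fin.sum_univ_eq_sum_range (fun n => if t ≤ n ∧ n ≤ p + t then
          γ |(r : ℤ) - (n : ℤ)| * (φ (p + t - n) * S t) else 0) (p + ℓ)
    rw [hfin]
    have hcond : ∀ n : ℕ, (if t ≤ n ∧ n ≤ p + t then
          γ |(r : ℤ) - (n : ℤ)| * (φ (p + t - n) * S t) else 0)
        = (if n ∈ Finset.Ico t (p + t + 1) then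
          γ |(r : ℤ) - (n : ℤ)| * (φ (p + t - n) * S t) else 0) := by
      intro n
      congr 1
      simp [Finset.mem_Ico]
    rw [Finset.sum_congr rfl fun n _ => hcond n, Finset.sum_ite_mem]
    have hsub : Finset.range (p + ℓ) ∩ Finset.Ico t (p + t + 1) = Finset.Ico t (p + t + 1) := by
      apply Finset.inter_eq_right.mpr
      intro n hn
      rw [Finset.mem_Ico] at hn
      rw [Finset.mem_range]
      omega
    rw [hsub, Finset.sum_Ico_eq_sum_range]
    have hlen : p + t + 1 - t = p + 1 := by omega
    rw [hlen]
    -- now reflect the sum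
    have hterm : ∀ k ∈ Finset.range (p + 1),
        γ |(r : ℤ) - ((t + k : ℕ) : ℤ)| * (φ (p + t - (t + k)) * S t)
        = (fun j => φ j * γ ((p : ℤ) + (t : ℤ) - (r : ℤ) - (j : ℤ)) * S t) (p - k) := by
      intro k hk
      rw [Finset.mem_range] at hk
      have hk' : k ≤ p := by omega
      have e1 : p + t - (t + k) = p - k := by omega
      have e2 : ((p - k : ℕ) : ℤ) = (p : ℤ) - (k : ℤ) := by omega
      have e3 : γ |(r : ℤ) - ((t + k : ℕ) : ℤ)|
          = γ ((p : ℤ) + (t : ℤ) - (r : ℤ) - ((p : ℤ) - (k : ℤ))) := by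
        rw [hγabs]
        have harg : (p : ℤ) + (t : ℤ) - (r : ℤ) - ((p : ℤ) - (k : ℤ))
            = -((r : ℤ) - ((t + k : ℕ) : ℤ)) := by push_cast; ring
        rw [harg, hsym]
      simp only [e1, e2, e3]
      ring
    rw [Finset.sum_congr rfl hterm]
    have hrefl := Finset.sum_range_reflect
      (fun j => φ j * γ ((p : ℤ) + (t : ℤ) - (r : ℤ) - (j : ℤ)) * S t) (p + 1)
    simp only [Nat.add_sub_cancel] at hrefl
    rw [hrefl]
    simp only [hgdef, Finset.mul_sum, Finset.sum_mul]
    refine Finset.sum_congr rfl fun j _ => ?_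
    ring
  set e : Fin (p + ℓ) → ℝ := fun r => if p ≤ (r : ℕ) then 1 else 0 with hedef
  have hA : Γ (p + ℓ) *ᵥ x = σ2 • e := by
    funext r
    rw [hGx r]
    simp only [Pi.smul_apply, smul_eq_mul, hedef]
    by_cases hr : p ≤ (r : ℕ)
    · rw [if_pos hr, mul_one]
      have hi : (r : ℕ) - p < ℓ := by have := r.isLt; omega
      rw [Finset.range_eq_Ico, ← Finset.sum_Ico_consecutive
        (fun t => S t * g ((p : ℤ) + (t : ℤ) - (r : ℤ)))
        (Nat.zero_le ((r : ℕ) - p + 1)) (by omega : (r : ℕ) - p + 1 ≤ ℓ)]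
      have h2 : ∑ t ∈ Finset.Ico ((r : ℕ) - p + 1) ℓ, S t * g ((p : ℤ) + (t : ℤ) - (r : ℤ)) = 0 := by
        refine Finset.sum_eq_zero fun t ht => ?_
        rw [Finset.mem_Ico] at ht
        rw [g_pos _ (by omega), mul_zero]
      rw [h2, add_zero, ← Finset.range_eq_Ico]
      have h3 : ∀ t ∈ Finset.range ((r : ℕ) - p + 1),
          S t * g ((p : ℤ) + (t : ℤ) - (r : ℤ)) = S t * g ((t : ℤ) - (((r : ℕ) - p : ℕ) : ℤ)) := by
        intro t _
        have harg : (p : ℤ) + (t : ℤ) - ((r : ℕ) : ℤ) = (t : ℤ) - (((r : ℕ) - p : ℕ) : ℤ) := by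
          omega
        rw [harg]
      rw [Finset.sum_congr rfl h3]
      exact key ((r : ℕ) - p) (by omega)
    · rw [if_neg hr, mul_zero]
      refine Finset.sum_eq_zero fun t ht => ?_
      rw [g_pos _ (by omega), mul_zero]
  have hdet : IsUnit (Γ (p + ℓ)).det := by
    have := (hpd (p + ℓ) (by omega)).det_pos
    exact isUnit_iff_ne_zero.mpr this.ne'
  have hinv : x = σ2 • ((Γ (p + ℓ))⁻¹ *ᵥ e) := by
    have h1 : (Γ (p + ℓ))⁻¹ *ᵥ ((Γ (p + ℓ)) *ᵥ x) = x := by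
      rw [Matrix.mulVec_mulVec, Matrix.nonsing_inv_mul _ hdet, Matrix.one_mulVec]
    rw [hA, Matrix.mulVec_smul] at h1
    exact h1.symm
  set D : ℕ → Fin (p + ℓ) := fun n => if h : n < p + ℓ then ⟨n, h⟩ else ⟨0, by omega⟩ with hDdef
  have hDval : ∀ n : ℕ, n < p + ℓ → ((D n : Fin (p + ℓ)) : ℕ) = n := by
    intro n hn
    simp [hDdef, hn]
  -- row sums of the inverse
  have hrow : ∀ r : Fin (p + ℓ),
      σ2 * ∑ b ∈ Finset.range ℓ, (Γ (p + ℓ))⁻¹ r (D (p + b)) = x r := by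
    intro r
    have hDv : ∀ v : Fin (p + ℓ), D ((v : ℕ)) = v := by
      intro v
      simp [hDdef, v.isLt]
    have h0 : x r = σ2 * ∑ v : Fin (p + ℓ), (Γ (p + ℓ))⁻¹ r v * e v := by
      rw [hinv]
      simp [Matrix.mulVec, dotProduct]
    rw [h0]
    congr 1
    have h1 : (∑ v : Fin (p + ℓ), (Γ (p + ℓ))⁻¹ r v * e v)
        = ∑ n ∈ Finset.range (p + ℓ), (Γ (p + ℓ))⁻¹ r (D n) * e (D n) := by
      rw [← Fin.sum_univ_eq_sum_range (fun n => (Γ (p + ℓ))⁻¹ r (D n) * e (D n)) (p + ℓ)]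
      refine Finset.sum_congr rfl fun v _ => ?_
      rw [hDv v]
    have h2 : ∑ n ∈ Finset.Ico 0 p, (Γ (p + ℓ))⁻¹ r (D n) * e (D n) = 0 := by
      refine Finset.sum_eq_zero fun n hn => ?_
      rw [Finset.mem_Ico] at hn
      have : e (D n) = 0 := by
        simp only [hedef]
        rw [hDval n (by omega)]
        simp
        omega
      rw [this, mul_zero]
    conv_rhs => rw [h1, Finset.range_eq_Ico, ← Finset.sum_Ico_consecutive
      (fun n => (Γ (p + ℓ))⁻¹ r (D n) * e (D n)) (Nat.zero_le p) (by omega : p ≤ p + ℓ),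
      h2, zero_add, Finset.sum_Ico_eq_sum_range, hmp]
    refine Finset.sum_congr rfl fun b hb => ?_
    rw [Finset.mem_range] at hb
    have : e (D (p + b)) = 1 := by
      simp only [hedef]
      rw [hDval (p + b) (by omega)]
      simp
    rw [this, mul_one]
  -- sum of x over the last block
  have hxsum : ∑ a ∈ Finset.range ℓ, x (D (p + a)) = ∑ t ∈ Finset.range ℓ, S t * S t := by
    have h1 : ∀ a ∈ Finset.range ℓ, x (D (p + a))
        = ∑ t ∈ Finset.range ℓ, (if a ≤ t then φ (t - a) * S t else 0) := by
      intro a ha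
      rw [Finset.mem_range] at ha
      simp only [hxdef]
      rw [hDval (p + a) (by omega)]
      refine Finset.sum_congr rfl fun t ht => ?_
      rw [Finset.mem_range] at ht
      by_cases hat : a ≤ t
      · rw [if_pos (by omega : t ≤ p + a ∧ p + a ≤ p + t), if_pos hat]
        have : p + t - (p + a) = t - a := by omega
        rw [this]
      · rw [if_neg (by omega), if_neg hat]
    rw [Finset.sum_congr rfl h1, Finset.sum_comm]
    refine Finset.sum_congr rfl fun t ht => ?_
    rw [Finset.mem_range] at ht
    have h2 : ∀ a : ℕ, (if a ≤ t then φ (t - a) * S t else 0)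
        = (if a ∈ Finset.range (t + 1) then φ (t - a) * S t else 0) := by
      intro a
      congr 1
      simp only [Finset.mem_range, eq_iff_iff]
      omega
    rw [Finset.sum_congr rfl fun a _ => h2 a, Finset.sum_ite_mem]
    rw [Finset.inter_eq_right.mpr (by
      intro n hn
      simp only [Finset.mem_range] at *
      omega)]
    rw [← Finset.sum_mul]
    congr 1
    have hrefl := Finset.sum_range_reflect φ (t + 1)
    simp only [Nat.add_sub_cancel] at hrefl
    rw [hSdef]
    exact hrefl
  -- final assembly
  show s (p + ℓ) = _
  simp only [s]
  have hDmk : ∀ (n : ℕ) (h : n < p + ℓ), (⟨n, h⟩ : Fin (p + ℓ)) = D n := by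
    intro n h
    simp [hDdef, h]
  simp only [hDmk]
  have t1 : ∀ c : Fin (p + ℓ), (∑ j : Fin (p + ℓ - p), σ2 * (Γ (p + ℓ))⁻¹ c (D (p + (j : ℕ))))
      = ∑ b ∈ Finset.range (p + ℓ - p), σ2 * (Γ (p + ℓ))⁻¹ c (D (p + b)) := by
    intro c
    exact Fin.sum_univ_eq_sum_range (fun b => σ2 * (Γ (p + ℓ))⁻¹ c (D (p + b))) (p + ℓ - p)
  simp only [t1]
  rw [Fin.sum_univ_eq_sum_range
    (fun a => ∑ b ∈ Finset.range (p + ℓ - p), σ2 * (Γ (p + ℓ))⁻¹ (D (p + a)) (D (p + b))) (p + ℓ - p)]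
  rw [hmp]
  have h4 : ∀ a ∈ Finset.range ℓ, (∑ b ∈ Finset.range ℓ, σ2 * (Γ (p + ℓ))⁻¹ (D (p + a)) (D (p + b)))
      = x (D (p + a)) := by
    intro a _
    rw [← hrow (D (p + a)), Finset.mul_sum]
  rw [Finset.sum_congr rfl h4, hxsum]
  congr 1
  refine Finset.sum_congr rfl fun t _ => ?_
  rw [sq]
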